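/- With F((a,t),(a',t'), ⊥) evaluated at lead 0, the induced one-step distance between implementation labels with equal discrete symbols is |t − t'|, and the recursively defined trace distance d_T = g ∘ h_T on finite traces σ = (a_0,x_0)...(a_n,x_n) and σ' = (a_0,x_0')...(a_n,x_n') (same discrete labels) equals the maximum-lead distance max_{0≤m≤n} |Σ_{i=0}^m x_i − Σ_{i=0}^m x_i'|. -/

import Mathlib

def LL : Type := ℝ → ENNReal

noncomputable instance : CompleteLattice LL := Pi.instCompleteLattice

noncomputable def F {Alph : Type} [DecidableEq Alph] (k l : Alph × NNReal) (α : LL) : LL :=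
  if k.1 = l.1 then
    fun d => max (ENNReal.ofReal |d + (k.2 : ℝ) - (l.2 : ℝ)|) (α (d + (k.2 : ℝ) - (l.2 : ℝ)))
  else ⊤

/-- The recursively defined trace distance lift `h_T` on finite traces. -/
noncomputable def hT {Alph : Type} [DecidableEq Alph] :
    List (Alph × NNReal) → List (Alph × NNReal) → LL
  | [], [] => ⊥
  | k :: σ, l :: τ => F k l (hT σ τ)
  | _, _ => ⊤

/-- `g` evaluates at lead `0`. -/
noncomputable def g (α : LL) : ENNReal := α 0

/-- The one-step distance between implementation labels with equal discrete symbols is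
`|t − t'|`, and the trace distance `d_T = g ∘ h_T` on finite traces with identical
discrete labels is exactly the maximum-lead distance
`max_{0 ≤ m ≤ n} |Σ_{i≤m} x_i − Σ_{i≤m} x_i'|`. -/

lemma sup_range_succ_zero (f : ℕ → ENNReal) (n : ℕ) :
    (Finset.range (n+1)).sup f = f 0 ⊔ (Finset.range n).sup (fun m => f (m+1)) := by
  induction n with
  | zero => simp
  | succ n ih =>
      rw [Finset.range_add_one, Finset.sup_insert, ih, Finset.range_add_one, Finset.sup_insert,
        sup_left_comm]

lemma hT_eval {Alph : Type} [DecidableEq Alph] :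
    ∀ (σ τ : List (Alph × NNReal)), σ.map Prod.fst = τ.map Prod.fst → ∀ d : ℝ,
      hT σ τ d = (Finset.range σ.length).sup (fun m =>
        ENNReal.ofReal |d + (((σ.take (m + 1)).map (fun p => (p.2 : ℝ))).sum) -
          (((τ.take (m + 1)).map (fun p => (p.2 : ℝ))).sum)|)
  | [], [], _, d => by simp [hT]; rfl
  | k :: σ, l :: τ, h, d => by
      simp only [List.map_cons, List.cons.injEq] at h
      obtain ⟨h1, h2⟩ := h
      have ih := hT_eval σ τ h2 (d + (k.2 : ℝ) - (l.2 : ℝ))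
      have e : hT (k :: σ) (l :: τ) d = max (ENNReal.ofReal |d + (k.2 : ℝ) - (l.2 : ℝ)|) (hT σ τ (d + (k.2 : ℝ) - (l.2 : ℝ))) := by
        rw [hT, F]
        exact congrFun (if_pos h1) d
      rw [e, ih, List.length_cons]
      rw [sup_range_succ_zero]
      congr 1
      · simp
      · rw [Finset.sup_congr rfl]
        intro m _
        simp only [List.take_succ_cons, List.map_cons, List.sum_cons]
        ring_nf

theorem dT_is_maximum_lead0 : True := trivial

theorem dT_is_maximum_lead {Alph : Type} [DecidableEq Alph] :
    (∀ (a : Alph) (t t' : NNReal),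
        g (F (a, t) (a, t') ⊥) = ENNReal.ofReal |(t : ℝ) - (t' : ℝ)|) ∧
    (∀ σ τ : List (Alph × NNReal), σ.map Prod.fst = τ.map Prod.fst →
        g (hT σ τ) =
          (Finset.range σ.length).sup (fun m =>
            ENNReal.ofReal |(((σ.take (m + 1)).map (fun p => (p.2 : ℝ))).sum) -
              (((τ.take (m + 1)).map (fun p => (p.2 : ℝ))).sum)|)) := by
  constructor
  · intro a t t'
    have hb : ∀ x, (⊥ : LL) x = 0 := fun _ => rfl
    simp [g, F, hb]
  · intro σ τ h
    rw [g, hT_eval σ τ h 0]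
    simp
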